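/- Let H = ⟨x⟩ ⋉ ℤⁿ where x acts on ℤⁿ by a matrix X ∈ SL_n(ℤ). If H is not virtually nilpotent, then X has a complex eigenvalue of absolute value strictly greater than 1. -/

import Mathlib

/-- The automorphism of `ℤⁿ` (written multiplicatively) induced by `X ∈ SL_n(ℤ)`. -/
def sslAut (n : ℕ) (X : Matrix.SpecialLinearGroup (Fin n) ℤ) :
    MulAut (Multiplicative (Fin n → ℤ)) :=
  AddEquiv.toMultiplicative (Matrix.SpecialLinearGroup.toLin' X).toAddEquiv

/-- The action of `ℤ` on `ℤⁿ` by powers of `X`. -/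
def sslAction (n : ℕ) (X : Matrix.SpecialLinearGroup (Fin n) ℤ) :
    Multiplicative ℤ →* MulAut (Multiplicative (Fin n → ℤ)) :=
  zpowersHom _ (sslAut n X)

/-- The semidirect product `H = ℤ ⋉ ℤⁿ`, with `ℤ` acting via `X ∈ SL_n(ℤ)`. -/
def sdp (n : ℕ) (X : Matrix.SpecialLinearGroup (Fin n) ℤ) : Type :=
  SemidirectProduct (Multiplicative (Fin n → ℤ)) (Multiplicative ℤ) (sslAction n X)

instance (n : ℕ) (X : Matrix.SpecialLinearGroup (Fin n) ℤ) : Group (sdp n X) :=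
  SemidirectProduct.instGroup

/-- The generator `x` of the cyclic factor of `ℤ ⋉ ℤⁿ`. -/
def sdpx (n : ℕ) (X : Matrix.SpecialLinearGroup (Fin n) ℤ) : sdp n X :=
  SemidirectProduct.inr (Multiplicative.ofAdd (1 : ℤ))

/-- The standard generator `eᵢ` of the `ℤⁿ` factor of `ℤ ⋉ ℤⁿ`. -/
def sdpe (n : ℕ) (X : Matrix.SpecialLinearGroup (Fin n) ℤ) (i : Fin n) : sdp n X :=
  SemidirectProduct.inl (Multiplicative.ofAdd (Pi.single i (1 : ℤ)))

/-- The generating set `{x, e₁, …, eₙ}` of `ℤ ⋉ ℤⁿ`. -/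
def sdpGens (n : ℕ) (X : Matrix.SpecialLinearGroup (Fin n) ℤ) : Set (sdp n X) :=
  {sdpx n X} ∪ Set.range (sdpe n X)

/-- A group is virtually nilpotent if it has a nilpotent subgroup of finite index. -/
def IsVirtuallyNilpotent (G : Type*) [Group G] : Prop :=
  ∃ H : Subgroup G, H.FiniteIndex ∧ Group.IsNilpotent H

section Aux

open Polynomial Matrix SemidirectProduct IntermediateField
open scoped commutatorElement


lemma prod_le_one_nn (r : Multiset ℂ) (h : ∀ z ∈ r, ‖z‖₊ ≤ 1) : ‖r.prod‖₊ ≤ 1 := by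
  induction r using Multiset.induction with
  | empty => simp
  | cons a s ih =>
    rw [Multiset.prod_cons, nnnorm_mul]
    exact mul_le_one' (h a (Multiset.mem_cons_self a s))
      (ih fun z hz => h z (Multiset.mem_cons_of_mem hz))

lemma all_norm_one (r : Multiset ℂ) (h : ∀ z ∈ r, ‖z‖₊ ≤ 1) (hp : r.prod = 1) :
    ∀ z ∈ r, ‖z‖ = 1 := by
  intro z hz
  obtain ⟨s, rfl⟩ := Multiset.exists_cons_of_mem hz
  rw [Multiset.prod_cons] at hp
  have h1 : ‖z‖₊ * ‖s.prod‖₊ = 1 := by rw [← nnnorm_mul, hp]; simp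
  have h2 : ‖s.prod‖₊ ≤ 1 := prod_le_one_nn s fun w hw => h w (Multiset.mem_cons_of_mem hw)
  have h3 : ‖z‖₊ ≤ 1 := h z (Multiset.mem_cons_self z s)
  have : ‖z‖₊ = 1 := le_antisymm h3 (by
    calc (1:NNReal) = ‖z‖₊ * ‖s.prod‖₊ := h1.symm
    _ ≤ ‖z‖₊ * 1 := mul_le_mul_right h2 _
    _ = ‖z‖₊ := mul_one _)
  have := congrArg (fun x : NNReal => (x:ℝ)) this
  simpa using this


lemma kronecker_root_of_unity {μ : ℂ} (hint : IsIntegral ℤ μ)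
    (hconj : ∀ z : ℂ, (Polynomial.aeval z) (minpoly ℚ μ) = 0 → ‖z‖ = 1) :
    ∃ m : ℕ, 0 < m ∧ μ ^ m = 1 := by
  have hQ : IsIntegral ℚ μ := hint.tower_top
  let K : IntermediateField ℚ ℂ := IntermediateField.adjoin ℚ {μ}
  haveI : FiniteDimensional ℚ K := IntermediateField.adjoin.finiteDimensional hQ
  haveI : NumberField K := ⟨⟩
  set x : K := IntermediateField.AdjoinSimple.gen ℚ μ with hx
  have halg : algebraMap K ℂ x = μ := rfl
  have hxint : IsIntegral ℤ x := by
    rwa [← isIntegral_algebraMap_iff (algebraMap K ℂ).injective, halg]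
  have hmin : minpoly ℚ x = minpoly ℚ μ := by
    exact IntermediateField.minpoly_gen ℚ μ
  have hnorm : ∀ φ : K →+* ℂ, ‖φ x‖ = 1 := by
    intro φ
    have hmem : φ x ∈ Set.range fun ψ : K →+* ℂ => ψ x := ⟨φ, rfl⟩
    rw [NumberField.Embeddings.range_eval_eq_rootSet_minpoly K ℂ x] at hmem
    rw [mem_rootSet] at hmem
    exact hconj _ (by rw [← hmin]; exact hmem.2)
  obtain ⟨m, hm, hpow⟩ := NumberField.Embeddings.pow_eq_one_of_norm_eq_one K ℂ hxint hnorm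
  refine ⟨m, hm, ?_⟩
  have := congrArg (algebraMap K ℂ) hpow
  rwa [_root_.map_pow, halg, _root_.map_one] at this


lemma root_mem_spectrum {n : ℕ} (M : Matrix (Fin n) (Fin n) ℂ) {z : ℂ}
    (hz : M.charpoly.eval z = 0) : z ∈ spectrum ℂ M := by
  rw [spectrum.mem_iff]
  intro hu
  rw [Matrix.isUnit_iff_isUnit_det] at hu
  have h : (algebraMap ℂ (Matrix (Fin n) (Fin n) ℂ) z - M).det = M.charpoly.eval z := by
    rw [Matrix.charpoly, eval_det, matPolyEquiv_charmatrix]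
    simp [Matrix.scalar]
    congr 1
  rw [h, hz] at hu
  simp at hu

lemma unipotent_pow_of_spectrum_le (n : ℕ) (T : Matrix.SpecialLinearGroup (Fin n) ℤ)
    (hle : ∀ μ ∈ spectrum ℂ ((T : Matrix (Fin n) (Fin n) ℤ).map (Int.cast : ℤ → ℂ)),
      ‖μ‖ ≤ 1) :
    ∃ k : ℕ, 0 < k ∧ (((T : Matrix (Fin n) (Fin n) ℤ)) ^ k - 1) ^ n = 0 := by
  set A : Matrix (Fin n) (Fin n) ℤ := (T : Matrix (Fin n) (Fin n) ℤ) with hA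
  set M : Matrix (Fin n) (Fin n) ℂ := A.map (Int.cast : ℤ → ℂ) with hM
  set p : ℂ[X] := M.charpoly with hp
  have hpmap : p = A.charpoly.map (Int.castRingHom ℂ) := Matrix.charpoly_map A (Int.castRingHom ℂ)
  have hmono : p.Monic := M.charpoly_monic
  have hroot_spec : ∀ z ∈ p.roots, z ∈ spectrum ℂ M := fun z hz =>
    root_mem_spectrum M (isRoot_of_mem_roots hz)
  have hle' : ∀ z ∈ p.roots, ‖z‖₊ ≤ 1 := by
    intro z hz
    have := hle z (hroot_spec z hz)
    exact_mod_cast this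
  have hdet : M.det = 1 := by
    have h1 : (Int.castRingHom ℂ) A.det = ((Int.castRingHom ℂ).mapMatrix A).det :=
      (RingHom.map_det _ _)
    have h2 : A.det = 1 := T.prop
    have h3 : (Int.castRingHom ℂ).mapMatrix A = M := rfl
    rw [← h3, ← h1, h2]
    simp
  have hprod : p.roots.prod = 1 := by
    rw [hp, ← Matrix.det_eq_prod_roots_charpoly, hdet]
  have habs1 : ∀ z ∈ p.roots, ‖z‖ = 1 := all_norm_one _ hle' hprod
  have hrou : ∀ z ∈ p.roots.toFinset, ∃ m : ℕ, 0 < m ∧ z ^ m = 1 := by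
    intro z hz
    rw [Multiset.mem_toFinset] at hz
    have hint : IsIntegral ℤ z := by
      refine ⟨A.charpoly, A.charpoly_monic, ?_⟩
      have h0 : p.eval z = 0 := isRoot_of_mem_roots hz
      rw [hpmap] at h0
      rwa [eval_map] at h0
    refine kronecker_root_of_unity hint ?_
    intro w hw
    refine habs1 w ?_
    have hcomp : (algebraMap ℚ ℂ).comp (Int.castRingHom ℚ) = Int.castRingHom ℂ := by
      ext1; simp
    have hdvd : minpoly ℚ z ∣ A.charpoly.map (Int.castRingHom ℚ) := by
      apply minpoly.dvd
      have h0 : p.eval z = 0 := isRoot_of_mem_roots hz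
      rw [hpmap] at h0
      rw [aeval_def, ← eval_map, Polynomial.map_map, hcomp]
      exact h0
    have hdvd2 : (minpoly ℚ z).map (algebraMap ℚ ℂ) ∣ p := by
      rw [hpmap, ← hcomp, ← Polynomial.map_map]
      exact Polynomial.map_dvd _ hdvd
    have hwroot : ((minpoly ℚ z).map (algebraMap ℚ ℂ)).eval w = 0 := by
      rw [eval_map, ← aeval_def]
      exact hw
    rw [mem_roots hmono.ne_zero]
    obtain ⟨c, hc⟩ := hdvd2
    rw [IsRoot, hc, eval_mul, hwroot, zero_mul]
  classical
  set S := p.roots.toFinset with hS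
  set d : ℂ → ℕ := fun z => if h : z ∈ S then (hrou z h).choose else 1 with hd
  have hdpos : ∀ z, 0 < d z := by
    intro z
    by_cases h : z ∈ S <;> simp only [hd, dif_pos, dif_neg, h]
    · exact (hrou z h).choose_spec.1
    · simp
  have hdpow : ∀ z ∈ S, z ^ d z = 1 := by
    intro z h
    simp only [hd, dif_pos h]
    exact (hrou z h).choose_spec.2
  set k : ℕ := S.prod d with hk
  have hkpos : 0 < k := Finset.prod_pos fun z _ => hdpos z
  have hzk : ∀ z ∈ p.roots, z ^ k = 1 := by
    intro z hz
    have hzS : z ∈ S := Multiset.mem_toFinset.2 hz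
    obtain ⟨t, ht⟩ := Finset.dvd_prod_of_mem d hzS
    rw [hk, ht, pow_mul, hdpow z hzS, one_pow]
  refine ⟨k, hkpos, ?_⟩
  have hsplit : p.Splits := IsAlgClosed.splits p
  have hcard : p.roots.card = n := by
    rw [(Polynomial.splits_iff_card_roots).1 hsplit, hpmap,
      A.charpoly_monic.natDegree_map, Matrix.charpoly_natDegree_eq_dim, Fintype.card_fin]
  have hfac : p = (p.roots.map fun z => Polynomial.X - C z).prod :=
    hsplit.eq_prod_roots_of_monic hmono
  have hdvd3 : p ∣ ((Polynomial.X : ℂ[X]) ^ k - 1) ^ n := by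
    rw [hfac]
    have hstep : ((p.roots.map fun z => (Polynomial.X : ℂ[X]) - C z).prod) ∣
        ((p.roots.map fun _ => (Polynomial.X : ℂ[X]) ^ k - 1).prod) := by
      apply Multiset.prod_dvd_prod_of_dvd
      intro z hz
      rw [dvd_iff_isRoot]
      simp [IsRoot, hzk z hz]
    refine hstep.trans ?_
    rw [Multiset.map_const', Multiset.prod_replicate, hcard]
  have hCH : aeval M p = 0 := M.aeval_self_charpoly
  have hMz : (M ^ k - 1) ^ n = 0 := by
    obtain ⟨c, hc⟩ := hdvd3
    have h5 := congrArg (aeval M) hc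
    rw [_root_.map_mul, hCH, zero_mul] at h5
    simpa using h5
  have hmapz : ((A ^ k - 1) ^ n).map (Int.cast : ℤ → ℂ) = 0 := by
    calc ((A ^ k - 1) ^ n).map (Int.cast : ℤ → ℂ)
        = (Int.castRingHom ℂ).mapMatrix ((A ^ k - 1) ^ n) := rfl
      _ = ((Int.castRingHom ℂ).mapMatrix (A) ^ k - 1) ^ n := by
          rw [_root_.map_pow, _root_.map_sub, _root_.map_pow, _root_.map_one]
      _ = (M ^ k - 1) ^ n := rfl
      _ = 0 := hMz
  ext i j
  have h6 := congrArg (fun mm : Matrix (Fin n) (Fin n) ℂ => mm i j) hmapz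
  simp only [Matrix.map_apply, Matrix.zero_apply] at h6 ⊢
  exact_mod_cast h6

-- the monoid hom from linear automorphisms to MulAut
def cHom (n : ℕ) : ((Fin n → ℤ) ≃ₗ[ℤ] (Fin n → ℤ)) →* MulAut (Multiplicative (Fin n → ℤ)) where
  toFun e := AddEquiv.toMultiplicative e.toAddEquiv
  map_one' := by ext x; rfl
  map_mul' e₁ e₂ := by ext x; rfl

lemma sslAut_eq (n : ℕ) (Y : Matrix.SpecialLinearGroup (Fin n) ℤ) :
    sslAut n Y = cHom n (Matrix.SpecialLinearGroup.toLin' Y) := rfl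

lemma cHom_apply (n : ℕ) (e : (Fin n → ℤ) ≃ₗ[ℤ] (Fin n → ℤ)) (v : Fin n → ℤ) :
    cHom n e (Multiplicative.ofAdd v) = Multiplicative.ofAdd (e v) := rfl

lemma hact (n : ℕ) (Y : Matrix.SpecialLinearGroup (Fin n) ℤ) (g : Multiplicative ℤ)
    (v : Fin n → ℤ) :
    sslAction n Y g (Multiplicative.ofAdd v)
      = Multiplicative.ofAdd ((Matrix.SpecialLinearGroup.toLin' Y ^ (Multiplicative.toAdd g)) v) := by
  have h1 : sslAction n Y g = (sslAut n Y) ^ (Multiplicative.toAdd g) := rfl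
  rw [h1, sslAut_eq, ← map_zpow, cHom_apply]

section ModuleLemmas

variable {n : ℕ} (Y : Matrix.SpecialLinearGroup (Fin n) ℤ)

local notation "E" => Matrix.SpecialLinearGroup.toLin' Y

noncomputable def Lm : Module.End ℤ (Fin n → ℤ) :=
  Matrix.toLinAlgEquiv' ((Y : Matrix (Fin n) (Fin n) ℤ) - 1)

lemma Lm_apply (v : Fin n → ℤ) : Lm Y v = E v - v := by
  rw [Lm, map_sub]
  simp [Matrix.SpecialLinearGroup.toLin'_apply]

lemma mulEquiv_apply (a b : (Fin n → ℤ) ≃ₗ[ℤ] (Fin n → ℤ)) (v : Fin n → ℤ) :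
    (a * b) v = a (b v) := rfl

lemma comm1 : ∀ w, E (Lm Y w) = Lm Y (E w) := by
  intro w
  rw [Lm_apply, Lm_apply, map_sub]

lemma comm1' : ∀ w, (E)⁻¹ (Lm Y w) = Lm Y ((E)⁻¹ w) := by
  intro w
  have h := comm1 Y ((E)⁻¹ w)
  have h2 : E ((E)⁻¹ w) = w := by
    have : (E * (E)⁻¹) w = w := by rw [mul_inv_cancel]; rfl
    rwa [mulEquiv_apply] at this
  rw [h2] at h
  rw [← h]
  show ((E)⁻¹ * E) (Lm Y ((E)⁻¹ w)) = Lm Y ((E)⁻¹ w)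
  rw [inv_mul_cancel]
  rfl

lemma commz : ∀ (z : ℤ) (w), (E ^ z) (Lm Y w) = Lm Y ((E ^ z) w) := by
  intro z
  induction z using Int.induction_on with
  | zero => intro w; rfl
  | succ i ih =>
    intro w
    rw [_root_.zpow_add_one, mulEquiv_apply, mulEquiv_apply, comm1, ih]
  | pred i ih =>
    intro w
    rw [_root_.zpow_sub_one, mulEquiv_apply, mulEquiv_apply, comm1', ih]

lemma commzpow : ∀ (j : ℕ) (z : ℤ) (w), (E ^ z) ((Lm Y ^ j) w) = (Lm Y ^ j) ((E ^ z) w) := by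
  intro j
  induction j with
  | zero => intro z w; rfl
  | succ i ih =>
    intro z w
    rw [pow_succ, Module.End.mul_apply, Module.End.mul_apply, ih, commz]

noncomputable def Mj (j : ℕ) : Submodule ℤ (Fin n → ℤ) := LinearMap.range (Lm Y ^ j)

lemma Mj_inv (j : ℕ) (z : ℤ) (v : Fin n → ℤ) (hv : v ∈ Mj Y j) : (E ^ z) v ∈ Mj Y j := by
  obtain ⟨w, rfl⟩ := hv
  exact ⟨(E ^ z) w, (commzpow Y j z w).symm⟩

lemma Mj_L (j : ℕ) (v : Fin n → ℤ) (hv : v ∈ Mj Y j) : Lm Y v ∈ Mj Y (j + 1) := by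
  obtain ⟨w, rfl⟩ := hv
  refine ⟨w, ?_⟩
  rw [pow_succ']
  rfl

lemma Mj_diff (j : ℕ) : ∀ (z : ℤ) (v : Fin n → ℤ), v ∈ Mj Y j → (E ^ z) v - v ∈ Mj Y (j + 1) := by
  intro z
  induction z using Int.induction_on with
  | zero => intro v _; simpa using (Mj Y (j+1)).zero_mem
  | succ i ih =>
    intro v hv
    have h1 : (E ^ ((i : ℤ) + 1)) v = (E ^ (i : ℤ)) (E v) := by
      rw [_root_.zpow_add_one, mulEquiv_apply]
    have hEv : E v ∈ Mj Y j := by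
      have := Mj_inv Y j 1 v hv
      rwa [zpow_one] at this
    have h2 := ih (E v) hEv
    have h3 : Lm Y v ∈ Mj Y (j + 1) := Mj_L Y j v hv
    have h4 : (E ^ ((i : ℤ) + 1)) v - v
        = ((E ^ (i : ℤ)) (E v) - E v) + (E v - v) := by rw [h1]; ring
    rw [h4]
    exact (Mj Y (j+1)).add_mem h2 (by rwa [← Lm_apply])
  | pred i ih =>
    intro v hv
    have h1 : (E ^ (-(i : ℤ) - 1)) v = (E ^ (-(i : ℤ))) ((E)⁻¹ v) := by
      rw [_root_.zpow_sub_one, mulEquiv_apply]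
    have hEv : (E)⁻¹ v ∈ Mj Y j := by
      have := Mj_inv Y j (-1) v hv
      rwa [_root_.zpow_neg_one] at this
    have h2 := ih ((E)⁻¹ v) hEv
    have h3 : Lm Y ((E)⁻¹ v) ∈ Mj Y (j + 1) := Mj_L Y j _ hEv
    have h5 : E ((E)⁻¹ v) = v := by
      have : (E * (E)⁻¹) v = v := by rw [mul_inv_cancel]; rfl
      rwa [mulEquiv_apply] at this
    have h4 : (E ^ (-(i : ℤ) - 1)) v - v
        = ((E ^ (-(i : ℤ))) ((E)⁻¹ v) - (E)⁻¹ v) - (E ((E)⁻¹ v) - (E)⁻¹ v) := by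
      rw [h1, h5]; ring
    rw [h4, ← Lm_apply]
    exact (Mj Y (j+1)).sub_mem h2 h3

end ModuleLemmas

section GroupLemmas

variable {n : ℕ} (Y : Matrix.SpecialLinearGroup (Fin n) ℤ)

abbrev SDP (n : ℕ) (Y : Matrix.SpecialLinearGroup (Fin n) ℤ) : Type :=
  SemidirectProduct (Multiplicative (Fin n → ℤ)) (Multiplicative ℤ) (sslAction n Y)

lemma comm_inl (nn : Multiplicative (Fin n → ℤ)) (y : SDP n Y) :
    ⁅(SemidirectProduct.inl nn : SDP n Y), y⁆
      = SemidirectProduct.inl (nn * (sslAction n Y y.right nn)⁻¹) := by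
  rw [commutatorElement_def]
  ext
  · simp [MulAut.inv_def, mul_comm, mul_left_comm, mul_assoc]
  · simp

theorem sdp_nilpotent_aux (h0 : ((Y : Matrix (Fin n) (Fin n) ℤ) - 1) ^ n = 0) :
    Group.IsNilpotent (SDP n Y) := by
  have hLn : Lm Y ^ n = 0 := by rw [Lm, ← map_pow, h0, map_zero]
  have hMn : Mj Y n = ⊥ := by rw [Mj, hLn, LinearMap.range_zero]
  let Sj : ℕ → Subgroup (Multiplicative (Fin n → ℤ)) := fun j =>
    AddSubgroup.toSubgroup (Mj Y j).toAddSubgroup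
  let Aj : ℕ → Subgroup (SDP n Y) := fun j => Subgroup.map SemidirectProduct.inl (Sj j)
  have hcomm_mem : ∀ j (x : SDP n Y), x ∈ Aj j → ∀ y : SDP n Y, ⁅x, y⁆ ∈ Aj (j + 1) := by
    intro j x hx y
    obtain ⟨nn, hnn, rfl⟩ := hx
    rw [comm_inl]
    apply Subgroup.mem_map_of_mem
    have hv : Multiplicative.toAdd nn ∈ Mj Y j := hnn
    show Multiplicative.toAdd (nn * (sslAction n Y y.right nn)⁻¹) ∈ (Mj Y (j + 1)).toAddSubgroup
    have hact' : sslAction n Y y.right nn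
        = Multiplicative.ofAdd ((Matrix.SpecialLinearGroup.toLin' Y
            ^ (Multiplicative.toAdd y.right)) (Multiplicative.toAdd nn)) := hact n Y y.right _
    have heq : Multiplicative.toAdd (nn * (sslAction n Y y.right nn)⁻¹)
        = -(((Matrix.SpecialLinearGroup.toLin' Y ^ (Multiplicative.toAdd y.right))
            (Multiplicative.toAdd nn)) - Multiplicative.toAdd nn) := by
      rw [hact']
      simp only [toAdd_mul, toAdd_inv, toAdd_ofAdd]
      ring
    rw [heq]
    exact (Mj Y (j + 1)).neg_mem (Mj_diff Y j _ _ hv)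
  have hlcs : ∀ j, Subgroup.lowerCentralSeries (⊤ : Subgroup (SDP n Y)) (j + 1) ≤ Aj j := by
    intro j
    induction j with
    | zero =>
      rw [Subgroup.lowerCentralSeries_succ, Subgroup.commutator_def]
      apply (Subgroup.closure_le _).2
      rintro x ⟨p, -, q, -, rfl⟩
      have hker : ⁅p, q⁆ ∈ (SemidirectProduct.inl :
          Multiplicative (Fin n → ℤ) →* SDP n Y).range := by
        rw [SemidirectProduct.range_inl_eq_ker_rightHom, MonoidHom.mem_ker,
          map_commutatorElement]
        simp [commutatorElement_def, mul_comm]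
      obtain ⟨v, hv⟩ := hker
      have : p * q * p⁻¹ * q⁻¹ = ⁅p, q⁆ := rfl
      rw [← hv]
      apply Subgroup.mem_map_of_mem
      exact ⟨Multiplicative.toAdd v, by simp⟩
    | succ i ih =>
      rw [Subgroup.lowerCentralSeries_succ, Subgroup.commutator_def]
      apply (Subgroup.closure_le _).2
      rintro x ⟨p, hp, q, -, rfl⟩
      have : p * q * p⁻¹ * q⁻¹ = ⁅p, q⁆ := rfl
      exact hcomm_mem i p (ih hp) q
  have hbot : Aj n ≤ ⊥ := by
    intro x hx
    obtain ⟨nn, hnn, rfl⟩ := hx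
    have h2 : Multiplicative.toAdd nn ∈ Mj Y n := hnn
    rw [hMn] at h2
    have h1 : nn = 1 := (Submodule.mem_bot ℤ).1 h2
    rw [h1, Subgroup.mem_bot, _root_.map_one]
  exact nilpotent_iff_lowerCentralSeries.2 ⟨n + 1, eq_bot_iff.2 ((hlcs n).trans hbot)⟩

theorem sdp_nilpotent (h0 : ((Y : Matrix (Fin n) (Fin n) ℤ) - 1) ^ n = 0) :
    Group.IsNilpotent (sdp n Y) :=
  sdp_nilpotent_aux Y h0

end GroupLemmas

section Embed

variable {n : ℕ} (X : Matrix.SpecialLinearGroup (Fin n) ℤ) (k : ℕ)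

lemma sslAut_pow : sslAut n (X ^ k) = (sslAut n X) ^ k := by
  rw [sslAut_eq, sslAut_eq, map_pow, map_pow]

def fk : Multiplicative ℤ →* Multiplicative ℤ :=
  AddMonoidHom.toMultiplicative (zmultiplesHom ℤ (k : ℤ))

lemma fk_apply (g : Multiplicative ℤ) :
    Multiplicative.toAdd (fk k g) = Multiplicative.toAdd g * (k : ℤ) := by
  simp [fk, zmultiplesHom_apply, smul_eq_mul, mul_comm]

lemma hcompat : ∀ g : Multiplicative ℤ,
    (MonoidHom.id (Multiplicative (Fin n → ℤ))).comp (sslAction n (X ^ k) g).toMonoidHom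
      = (sslAction n X (fk k g)).toMonoidHom.comp (MonoidHom.id _) := by
  intro g
  refine MonoidHom.ext fun v => ?_
  have h1 : sslAction n (X ^ k) g = (sslAut n (X ^ k)) ^ (Multiplicative.toAdd g) := rfl
  have h2 : sslAction n X (fk k g) = (sslAut n X) ^ (Multiplicative.toAdd (fk k g)) := rfl
  simp only [MonoidHom.comp_apply, MonoidHom.id_apply, MulEquiv.coe_toMonoidHom]
  rw [h1, h2, fk_apply, sslAut_pow, ← zpow_natCast (sslAut n X) k, mul_comm, _root_.zpow_mul]

noncomputable def Fk : SDP n (X ^ k) →* SDP n X :=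
  SemidirectProduct.map (MonoidHom.id _) (fk k) (hcompat X k)

lemma Fk_inj (hk : 0 < k) : Function.Injective (Fk X k) := by
  intro a b h
  have hl : a.left = b.left := by
    have := congrArg SemidirectProduct.left h
    simpa [Fk] using this
  have hr : a.right = b.right := by
    have := congrArg SemidirectProduct.right h
    simp only [Fk, SemidirectProduct.map_right] at this
    have h2 := congrArg Multiplicative.toAdd this
    rw [fk_apply, fk_apply] at h2
    have hk' : (k : ℤ) ≠ 0 := by exact_mod_cast hk.ne'
    have := mul_right_cancel₀ hk' h2
    exact Multiplicative.toAdd.injective this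
  ext : 1
  · exact hl
  · exact hr

lemma Fk_range : (Fk X k).range = Subgroup.comap (SemidirectProduct.rightHom)
    (AddSubgroup.toSubgroup (AddSubgroup.zmultiples (k : ℤ))) := by
  ext x
  constructor
  · rintro ⟨a, rfl⟩
    rw [Subgroup.mem_comap]
    have h1 : SemidirectProduct.rightHom ((Fk X k) a) = fk k a.right := rfl
    rw [h1]
    show Multiplicative.toAdd (fk k a.right) ∈ AddSubgroup.zmultiples (k : ℤ)
    rw [fk_apply]
    exact ⟨Multiplicative.toAdd a.right, by simp [smul_eq_mul, mul_comm]⟩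
  · intro hx
    rw [Subgroup.mem_comap] at hx
    have hx' : Multiplicative.toAdd x.right ∈ AddSubgroup.zmultiples (k : ℤ) := hx
    obtain ⟨m, hm⟩ := hx'
    refine ⟨⟨x.left, Multiplicative.ofAdd m⟩, ?_⟩
    have hr : fk k (Multiplicative.ofAdd m) = x.right := by
      apply Multiplicative.toAdd.injective
      rw [fk_apply]
      simpa [smul_eq_mul] using hm
    show (⟨x.left, fk k (Multiplicative.ofAdd m)⟩ : SDP n X) = x
    rw [hr]
  
lemma Fk_finiteIndex (hk : 0 < k) : ((Fk X k).range).FiniteIndex := by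
  constructor
  rw [Fk_range, Subgroup.index_comap_of_surjective _ SemidirectProduct.rightHom_surjective,
    AddSubgroup.index_toSubgroup, Int.index_zmultiples]
  simpa using hk.ne'

theorem virtuallyNilpotent_of_unipotent_pow (hk : 0 < k)
    (h0 : (((X : Matrix (Fin n) (Fin n) ℤ)) ^ k - 1) ^ n = 0) :
    ∃ H : Subgroup (SDP n X), H.FiniteIndex ∧ Group.IsNilpotent H := by
  have h0' : (((X ^ k : Matrix.SpecialLinearGroup (Fin n) ℤ) : Matrix (Fin n) (Fin n) ℤ) - 1) ^ n = 0 := by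
    rw [Matrix.SpecialLinearGroup.coe_pow]
    exact h0
  haveI hnil : Group.IsNilpotent (SDP n (X ^ k)) := sdp_nilpotent_aux (X ^ k) h0'
  have e : SDP n (X ^ k) ≃* (Fk X k).range := MonoidHom.ofInjective (Fk_inj X k hk)
  refine ⟨(Fk X k).range, Fk_finiteIndex X k hk, ?_⟩
  exact nilpotent_of_surjective e.toMonoidHom e.surjective

end Embed

end Aux

/-- Proposition 2: if `H = ℤ ⋉ ℤⁿ` (with `ℤ` acting via `X ∈ SL_n(ℤ)`) is not
virtually nilpotent, then `X` has a complex eigenvalue of absolute value `> 1`. -/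
theorem eigenvalue_gt_one_of_not_virtually_nilpotent (n : ℕ)
    (X : Matrix.SpecialLinearGroup (Fin n) ℤ)
    (hnvn : ¬ IsVirtuallyNilpotent (sdp n X)) :
    ∃ μ ∈ spectrum ℂ ((X : Matrix (Fin n) (Fin n) ℤ).map (Int.cast : ℤ → ℂ)),
      1 < ‖μ‖ := by
  by_contra hc
  push_neg at hc
  obtain ⟨k, hk, h0⟩ := unipotent_pow_of_spectrum_le n X hc
  obtain ⟨H, hfi, hnil⟩ := virtuallyNilpotent_of_unipotent_pow X k hk h0
  exact hnvn ⟨H, hfi, hnil⟩
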